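/- arXiv:1005.3402 — 4 statements merged into one kernel-verified Lean document; each statement's English description precedes it below -/
import Mathlib

section
/- For the map φ(x,y) = ((sin x · √(m+n)/√(2m+n)) e^{iπ m y}, (cos x · √(m+n)/√(m+2n)) e^{iπ n y}, √(n cos²x/(m+2n) + m sin²x/(2m+n)) e^{-iπ(m+n)y}), the Hermitian product ⟨φ, ∂φ/∂x⟩ vanishes identically. -/
noncomputable def conePhi (m n : ℕ) (x y : ℝ) : Fin 3 → ℂ :=
  ![((Real.sin x * Real.sqrt ((m : ℝ) + n) / Real.sqrt (2 * (m : ℝ) + n) : ℝ) : ℂ) *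
      Complex.exp (Complex.I * Real.pi * m * y),
    ((Real.cos x * Real.sqrt ((m : ℝ) + n) / Real.sqrt ((m : ℝ) + 2 * n) : ℝ) : ℂ) *
      Complex.exp (Complex.I * Real.pi * n * y),
    ((Real.sqrt ((n : ℝ) * Real.cos x ^ 2 / ((m : ℝ) + 2 * n) +
        (m : ℝ) * Real.sin x ^ 2 / (2 * (m : ℝ) + n)) : ℝ) : ℂ) *
      Complex.exp (-(Complex.I * Real.pi * ((m : ℝ) + n) * y))]

lemma exp_cancel (z : ℂ) : Complex.exp z * Complex.exp (-z) = 1 := by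
  rw [← Complex.exp_add, add_neg_cancel, Complex.exp_zero]

lemma prod_helper (r s : ℝ) (z : ℂ) (hz : (starRingEnd ℂ) z = -z) :
    (r : ℂ) * Complex.exp z * ((s : ℂ) * (starRingEnd ℂ) (Complex.exp z)) =
      ((r * s : ℝ) : ℂ) := by
  rw [← Complex.exp_conj, hz, Complex.ofReal_mul,
    show (r : ℂ) * Complex.exp z * ((s : ℂ) * Complex.exp (-z)) =
      (r : ℂ) * (s : ℂ) * (Complex.exp z * Complex.exp (-z)) by ring,
    exp_cancel, mul_one]

/-- `⟨φ, ∂φ/∂x⟩ = 0` identically. -/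
theorem stmt_1 (m n : ℕ) (hm : 0 < m) (hn : 0 < n) (x y : ℝ) :
    ∑ j : Fin 3, conePhi m n x y j *
      (starRingEnd ℂ) (deriv (fun t : ℝ => conePhi m n t y j) x) = 0 := by
  have hMpos : (0:ℝ) < (m:ℝ) := by exact_mod_cast hm
  have hNpos : (0:ℝ) < (n:ℝ) := by exact_mod_cast hn
  have hD1 : (0:ℝ) < 2 * (m:ℝ) + n := by linarith
  have hD2 : (0:ℝ) < (m:ℝ) + 2 * n := by linarith
  have hS : (0:ℝ) ≤ (m:ℝ) + n := by linarith
  set g : ℝ → ℝ := fun t =>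
    (n:ℝ) * Real.cos t ^ 2 / ((m:ℝ) + 2 * n) + (m:ℝ) * Real.sin t ^ 2 / (2 * (m:ℝ) + n)
    with hg
  have hgpos : 0 < g x := by
    rcases eq_or_ne (Real.cos x) 0 with h | h
    · have hs : Real.sin x ^ 2 = 1 := by
        have := Real.sin_sq_add_cos_sq x
        nlinarith
      simp only [hg, h, hs]
      positivity
    · have h1 : 0 < (n:ℝ) * Real.cos x ^ 2 / ((m:ℝ) + 2 * n) := by positivity
      have h2 : 0 ≤ (m:ℝ) * Real.sin x ^ 2 / (2 * (m:ℝ) + n) := by positivity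
      simp only [hg]; linarith
  have hgx : HasDerivAt g
      ((n:ℝ) * (2 * Real.cos x ^ 1 * -Real.sin x) / ((m:ℝ) + 2 * n) +
        (m:ℝ) * (2 * Real.sin x ^ 1 * Real.cos x) / (2 * (m:ℝ) + n)) x :=
    ((((Real.hasDerivAt_cos x).pow 2).const_mul _).div_const _).add
      ((((Real.hasDerivAt_sin x).pow 2).const_mul _).div_const _)
  set G : ℝ := (n:ℝ) * (2 * Real.cos x ^ 1 * -Real.sin x) / ((m:ℝ) + 2 * n) +
        (m:ℝ) * (2 * Real.sin x ^ 1 * Real.cos x) / (2 * (m:ℝ) + n) with hG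
  have hc : HasDerivAt (fun t => Real.sqrt (g t)) (G / (2 * Real.sqrt (g x))) x :=
    hgx.sqrt hgpos.ne'
  have hd0 : deriv (fun t : ℝ => conePhi m n t y 0) x =
      ((Real.cos x * Real.sqrt ((m:ℝ) + n) / Real.sqrt (2 * (m:ℝ) + n) : ℝ) : ℂ) *
        Complex.exp (Complex.I * Real.pi * m * y) := by
    refine HasDerivAt.deriv ?_
    simp only [conePhi, Matrix.cons_val_zero]
    exact ((((Real.hasDerivAt_sin x).mul_const _).div_const _).ofReal_comp).mul_const _
  have hd1 : deriv (fun t : ℝ => conePhi m n t y 1) x =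
      (((-Real.sin x) * Real.sqrt ((m:ℝ) + n) / Real.sqrt ((m:ℝ) + 2 * n) : ℝ) : ℂ) *
        Complex.exp (Complex.I * Real.pi * n * y) := by
    refine HasDerivAt.deriv ?_
    simp only [conePhi, Matrix.cons_val_one, Matrix.head_cons]
    exact ((((Real.hasDerivAt_cos x).mul_const _).div_const _).ofReal_comp).mul_const _
  have hd2 : deriv (fun t : ℝ => conePhi m n t y 2) x =
      ((G / (2 * Real.sqrt (g x)) : ℝ) : ℂ) *
        Complex.exp (-(Complex.I * Real.pi * ((m:ℝ) + n) * y)) := by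
    refine HasDerivAt.deriv ?_
    simp only [conePhi, Matrix.cons_val_two, Matrix.tail_cons, Matrix.head_cons, hg]
    exact (hc.ofReal_comp).mul_const _
  rw [Fin.sum_univ_three, hd0, hd1, hd2]
  simp only [conePhi, Matrix.cons_val_zero, Matrix.cons_val_one, Matrix.head_cons,
    Matrix.cons_val_two, Matrix.tail_cons, map_mul, Complex.conj_ofReal]
  have hz1 : (starRingEnd ℂ) (Complex.I * Real.pi * (m:ℂ) * y) =
      -(Complex.I * Real.pi * (m:ℂ) * y) := by
    simp [map_mul, Complex.conj_I, Complex.conj_ofReal]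
  have hz2 : (starRingEnd ℂ) (Complex.I * Real.pi * (n:ℂ) * y) =
      -(Complex.I * Real.pi * (n:ℂ) * y) := by
    simp [map_mul, Complex.conj_I, Complex.conj_ofReal]
  have hz3 : (starRingEnd ℂ) (-(Complex.I * Real.pi * (((m:ℝ):ℂ) + (n:ℂ)) * y)) =
      -(-(Complex.I * Real.pi * (((m:ℝ):ℂ) + (n:ℂ)) * y)) := by
    simp [map_mul, Complex.conj_I, Complex.conj_ofReal]
  rw [prod_helper _ _ _ hz1, prod_helper _ _ _ hz2, prod_helper _ _ _ hz3,
    ← Complex.ofReal_add, ← Complex.ofReal_add, Complex.ofReal_eq_zero]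
  have e1 : Real.sqrt ((m:ℝ) + n) * Real.sqrt ((m:ℝ) + n) = (m:ℝ) + n :=
    Real.mul_self_sqrt hS
  have e2 : Real.sqrt (2 * (m:ℝ) + n) * Real.sqrt (2 * (m:ℝ) + n) = 2 * (m:ℝ) + n :=
    Real.mul_self_sqrt hD1.le
  have e3 : Real.sqrt ((m:ℝ) + 2 * n) * Real.sqrt ((m:ℝ) + 2 * n) = (m:ℝ) + 2 * n :=
    Real.mul_self_sqrt hD2.le
  have hsg : Real.sqrt (g x) ≠ 0 := (Real.sqrt_pos.mpr hgpos).ne'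
  have e4 : Real.sqrt (g x) * (G / (2 * Real.sqrt (g x))) = G / 2 := by
    field_simp
  have h1 : Real.sin x * Real.sqrt ((m:ℝ) + n) / Real.sqrt (2 * (m:ℝ) + n) *
      (Real.cos x * Real.sqrt ((m:ℝ) + n) / Real.sqrt (2 * (m:ℝ) + n)) =
      Real.sin x * Real.cos x * ((m:ℝ) + n) / (2 * (m:ℝ) + n) := by
    rw [div_mul_div_comm, e2,
      show Real.sin x * Real.sqrt ((m:ℝ)+n) * (Real.cos x * Real.sqrt ((m:ℝ)+n)) =
        Real.sin x * Real.cos x * (Real.sqrt ((m:ℝ)+n) * Real.sqrt ((m:ℝ)+n)) by ring, e1]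
  have h2 : Real.cos x * Real.sqrt ((m:ℝ) + n) / Real.sqrt ((m:ℝ) + 2 * n) *
      (-Real.sin x * Real.sqrt ((m:ℝ) + n) / Real.sqrt ((m:ℝ) + 2 * n)) =
      -(Real.sin x * Real.cos x) * ((m:ℝ) + n) / ((m:ℝ) + 2 * n) := by
    rw [div_mul_div_comm, e3,
      show Real.cos x * Real.sqrt ((m:ℝ)+n) * (-Real.sin x * Real.sqrt ((m:ℝ)+n)) =
        -(Real.sin x * Real.cos x) * (Real.sqrt ((m:ℝ)+n) * Real.sqrt ((m:ℝ)+n)) by ring, e1]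
  rw [h1, h2, e4, hG]
  field_simp
  ring
end

section
/- For the map φ(x,y) = ((sin x · √(m+n)/√(2m+n)) e^{iπ m y}, (cos x · √(m+n)/√(m+2n)) e^{iπ n y}, √(n cos²x/(m+2n) + m sin²x/(2m+n)) e^{-iπ(m+n)y}), the Hermitian product ⟨φ, ∂φ/∂y⟩ vanishes identically. -/
lemma deriv_cexp_mul (a : ℂ) (c y : ℝ) :
    deriv (fun t : ℝ => (c : ℂ) * Complex.exp (a * t)) y
      = (c : ℂ) * (Complex.exp (a * y) * a) := by
  have h1 : HasDerivAt (fun t : ℝ => (t : ℂ)) 1 y := by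
    exact Complex.ofRealCLM.hasDerivAt (x := y)
  have h2 : HasDerivAt (fun t : ℝ => a * (t : ℂ)) a y := by
    simpa using h1.const_mul a
  have h3 := (h2.cexp).const_mul (c : ℂ)
  simpa [mul_comm, mul_assoc, mul_left_comm] using h3.deriv

lemma comp_term (c : ℝ) (a : ℂ) (y : ℝ) (ha : (starRingEnd ℂ) a = -a) :
    ((c : ℂ) * Complex.exp (a * y)) *
      (starRingEnd ℂ) ((c : ℂ) * (Complex.exp (a * y) * a)) = -((c : ℂ) ^ 2 * a) := by
  have h1 : (starRingEnd ℂ) (Complex.exp (a * y)) = (Complex.exp (a * y))⁻¹ := by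
    rw [← Complex.exp_conj, map_mul, ha, Complex.conj_ofReal, neg_mul, Complex.exp_neg]
  rw [map_mul, map_mul, h1, Complex.conj_ofReal, ha]
  field_simp [Complex.exp_ne_zero]

/-- `⟨φ, ∂φ/∂y⟩ = 0` identically. -/
theorem stmt_2 (m n : ℕ) (hm : 0 < m) (hn : 0 < n) (x y : ℝ) :
    ∑ j : Fin 3, conePhi m n x y j *
      (starRingEnd ℂ) (deriv (fun t : ℝ => conePhi m n x t j) y) = 0 := by
  have ha1 : (starRingEnd ℂ) (Complex.I * (Real.pi : ℂ) * (m : ℂ)) =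
      -(Complex.I * (Real.pi : ℂ) * (m : ℂ)) := by
    rw [map_mul, map_mul, Complex.conj_I, Complex.conj_ofReal, map_natCast]; ring
  have ha2 : (starRingEnd ℂ) (Complex.I * (Real.pi : ℂ) * (n : ℂ)) =
      -(Complex.I * (Real.pi : ℂ) * (n : ℂ)) := by
    rw [map_mul, map_mul, Complex.conj_I, Complex.conj_ofReal, map_natCast]; ring
  have ha3 : (starRingEnd ℂ) (-Complex.I * (Real.pi : ℂ) *
        (((m : ℝ) : ℂ) + ((n : ℕ) : ℂ))) =
      -(-Complex.I * (Real.pi : ℂ) * (((m : ℝ) : ℂ) + ((n : ℕ) : ℂ))) := by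
    simp only [map_mul, map_neg, map_add, Complex.conj_I, Complex.conj_ofReal, map_natCast]
    ring
  rw [Fin.sum_univ_three]
  simp only [conePhi, Matrix.cons_val_zero, Matrix.cons_val_one, Matrix.head_cons,
    Matrix.cons_val_two, Matrix.tail_cons, ← neg_mul]
  rw [deriv_cexp_mul, deriv_cexp_mul, deriv_cexp_mul,
    comp_term _ _ _ ha1, comp_term _ _ _ ha2, comp_term _ _ _ ha3]
  set c1 : ℝ := Real.sin x * Real.sqrt ((m : ℝ) + n) / Real.sqrt (2 * (m : ℝ) + n) with hc1
  set c2 : ℝ := Real.cos x * Real.sqrt ((m : ℝ) + n) / Real.sqrt ((m : ℝ) + 2 * n) with hc2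
  set c3 : ℝ := Real.sqrt ((n : ℝ) * Real.cos x ^ 2 / ((m : ℝ) + 2 * n) +
        (m : ℝ) * Real.sin x ^ 2 / (2 * (m : ℝ) + n)) with hc3
  have hm' : (0:ℝ) < m := by exact_mod_cast hm
  have hn' : (0:ℝ) < n := by exact_mod_cast hn
  have hc1sq : c1 ^ 2 = Real.sin x ^ 2 * ((m : ℝ) + n) / (2 * (m : ℝ) + n) := by
    rw [hc1, div_pow, mul_pow, Real.sq_sqrt (by positivity), Real.sq_sqrt (by positivity)]
  have hc2sq : c2 ^ 2 = Real.cos x ^ 2 * ((m : ℝ) + n) / ((m : ℝ) + 2 * n) := by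
    rw [hc2, div_pow, mul_pow, Real.sq_sqrt (by positivity), Real.sq_sqrt (by positivity)]
  have hc3sq : c3 ^ 2 = (n : ℝ) * Real.cos x ^ 2 / ((m : ℝ) + 2 * n) +
      (m : ℝ) * Real.sin x ^ 2 / (2 * (m : ℝ) + n) := by
    rw [hc3]; exact Real.sq_sqrt (by positivity)
  have hreal : c1 ^ 2 * (m : ℝ) + c2 ^ 2 * (n : ℝ) - c3 ^ 2 * ((m : ℝ) + n) = 0 := by
    rw [hc1sq, hc2sq, hc3sq]
    have hA : 2 * (m : ℝ) + n ≠ 0 := by positivity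
    have hB : (m : ℝ) + 2 * n ≠ 0 := by positivity
    field_simp
    ring
  have hC : ((c1 ^ 2 * (m : ℝ) + c2 ^ 2 * (n : ℝ) - c3 ^ 2 * ((m : ℝ) + n) : ℝ) : ℂ) = 0 := by
    rw [hreal, Complex.ofReal_zero]
  push_cast at hC ⊢
  linear_combination (-(Complex.I * (Real.pi : ℂ))) * hC
end

section
/- For the map φ(x,y) = ((sin x · √(m+n)/√(2m+n)) e^{iπ m y}, (cos x · √(m+n)/√(m+2n)) e^{iπ n y}, √(n cos²x/(m+2n) + m sin²x/(2m+n)) e^{-iπ(m+n)y}), the Hermitian product ⟨∂φ/∂x, ∂φ/∂y⟩ vanishes identically, so the induced metric ds² = |∂φ/∂x|² dx² + |∂φ/∂y|² dy² is diagonal in the coordinates (x,y). -/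
lemma key (a b c w : ℂ) (hw : (starRingEnd ℂ) w = -w) :
    (a * Complex.exp w) * (starRingEnd ℂ) (b * (c * Complex.exp w)) =
      a * (starRingEnd ℂ) b * (starRingEnd ℂ) c := by
  simp only [map_mul, ← Complex.exp_conj, hw]
  rw [show a * Complex.exp w * ((starRingEnd ℂ) b * ((starRingEnd ℂ) c * Complex.exp (-w))) =
      a * (starRingEnd ℂ) b * (starRingEnd ℂ) c * (Complex.exp w * Complex.exp (-w)) from by ring,
    ← Complex.exp_add, add_neg_cancel, Complex.exp_zero, mul_one]

/-- `⟨∂φ/∂x, ∂φ/∂y⟩ = 0` identically, so the induced metric is diagonal. -/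
theorem stmt_3 (m n : ℕ) (hm : 0 < m) (hn : 0 < n) (x y : ℝ) :
    ∑ j : Fin 3, deriv (fun t : ℝ => conePhi m n t y j) x *
      (starRingEnd ℂ) (deriv (fun t : ℝ => conePhi m n x t j) y) = 0 := by
  have hm' : (0:ℝ) < m := by exact_mod_cast hm
  have hn' : (0:ℝ) < n := by exact_mod_cast hn
  have hB2 : (0:ℝ) < 2 * (m:ℝ) + n := by linarith
  have hC2 : (0:ℝ) < (m:ℝ) + 2 * n := by linarith
  set g : ℝ → ℝ := fun t => (n : ℝ) * Real.cos t ^ 2 / ((m : ℝ) + 2 * n) +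
      (m : ℝ) * Real.sin t ^ 2 / (2 * (m : ℝ) + n) with hg_def
  have hgpos : 0 < g x := by
    rcases eq_or_ne (Real.cos x) 0 with h | h
    · have : Real.sin x ^ 2 = 1 := by
        have := Real.sin_sq_add_cos_sq x
        nlinarith
      simp only [hg_def, h]
      rw [this]
      positivity
    · have h1 : 0 < Real.cos x ^ 2 := by positivity
      have h2 : 0 ≤ Real.sin x ^ 2 := sq_nonneg _
      have : 0 < (n : ℝ) * Real.cos x ^ 2 / ((m : ℝ) + 2 * n) := by positivity
      have : 0 ≤ (m : ℝ) * Real.sin x ^ 2 / (2 * (m : ℝ) + n) := by positivity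
      simp only [hg_def]
      positivity
  have hS : Real.sqrt (g x) ≠ 0 := (Real.sqrt_pos.mpr hgpos).ne'
  -- x-derivatives
  have e0x : (fun t : ℝ => conePhi m n t y 0) =
      fun t => ((Real.sin t * Real.sqrt ((m : ℝ) + n) / Real.sqrt (2 * (m : ℝ) + n) : ℝ) : ℂ) *
        Complex.exp (Complex.I * Real.pi * m * y) := by funext t; rfl
  have e1x : (fun t : ℝ => conePhi m n t y 1) =
      fun t => ((Real.cos t * Real.sqrt ((m : ℝ) + n) / Real.sqrt ((m : ℝ) + 2 * n) : ℝ) : ℂ) *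
        Complex.exp (Complex.I * Real.pi * n * y) := by funext t; rfl
  have e2x : (fun t : ℝ => conePhi m n t y 2) =
      fun t => ((Real.sqrt (g t) : ℝ) : ℂ) *
        Complex.exp (-(Complex.I * Real.pi * ((m : ℝ) + n) * y)) := by funext t; rfl
  have e0y : (fun t : ℝ => conePhi m n x t 0) =
      fun t : ℝ => ((Real.sin x * Real.sqrt ((m : ℝ) + n) / Real.sqrt (2 * (m : ℝ) + n) : ℝ) : ℂ) *
        Complex.exp ((Complex.I * Real.pi * m) * (t:ℂ)) := by funext t; rfl
  have e1y : (fun t : ℝ => conePhi m n x t 1) =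
      fun t : ℝ => ((Real.cos x * Real.sqrt ((m : ℝ) + n) / Real.sqrt ((m : ℝ) + 2 * n) : ℝ) : ℂ) *
        Complex.exp ((Complex.I * Real.pi * n) * (t:ℂ)) := by funext t; rfl
  have e2y : (fun t : ℝ => conePhi m n x t 2) =
      fun t : ℝ => ((Real.sqrt (g x) : ℝ) : ℂ) *
        Complex.exp (-((Complex.I * Real.pi * ((m : ℝ) + n)) * (t:ℂ))) := by funext t; rfl
  have d0x : HasDerivAt
      (fun t : ℝ => ((Real.sin t * Real.sqrt ((m : ℝ) + n) / Real.sqrt (2 * (m : ℝ) + n) : ℝ) : ℂ) *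
        Complex.exp (Complex.I * Real.pi * m * y))
      (((Real.cos x * Real.sqrt ((m : ℝ) + n) / Real.sqrt (2 * (m : ℝ) + n) : ℝ) : ℂ) *
        Complex.exp (Complex.I * Real.pi * m * y)) x :=
    ((((Real.hasDerivAt_sin x).mul_const _).div_const _).ofReal_comp).mul_const _
  have d1x : HasDerivAt
      (fun t : ℝ => ((Real.cos t * Real.sqrt ((m : ℝ) + n) / Real.sqrt ((m : ℝ) + 2 * n) : ℝ) : ℂ) *
        Complex.exp (Complex.I * Real.pi * n * y))
      (((-Real.sin x * Real.sqrt ((m : ℝ) + n) / Real.sqrt ((m : ℝ) + 2 * n) : ℝ) : ℂ) *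
        Complex.exp (Complex.I * Real.pi * n * y)) x :=
    ((((Real.hasDerivAt_cos x).mul_const _).div_const _).ofReal_comp).mul_const _
  have dg : HasDerivAt g
      ((n : ℝ) * (2 * Real.cos x * (-Real.sin x)) / ((m : ℝ) + 2 * n) +
       (m : ℝ) * (2 * Real.sin x * Real.cos x) / (2 * (m : ℝ) + n)) x := by
    have h1 : HasDerivAt (fun t => Real.cos t ^ 2) (2 * Real.cos x * (-Real.sin x)) x := by
      have := (Real.hasDerivAt_cos x).fun_pow 2
      simpa [mul_comm, mul_assoc, mul_left_comm] using this
    have h2 : HasDerivAt (fun t => Real.sin t ^ 2) (2 * Real.sin x * Real.cos x) x := by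
      have := (Real.hasDerivAt_sin x).fun_pow 2
      simpa [mul_comm, mul_assoc, mul_left_comm] using this
    exact (((h1.const_mul _).div_const _).add ((h2.const_mul _).div_const _))
  have d2x : HasDerivAt
      (fun t : ℝ => ((Real.sqrt (g t) : ℝ) : ℂ) *
        Complex.exp (-(Complex.I * Real.pi * ((m : ℝ) + n) * y)))
      (((((n : ℝ) * (2 * Real.cos x * (-Real.sin x)) / ((m : ℝ) + 2 * n) +
       (m : ℝ) * (2 * Real.sin x * Real.cos x) / (2 * (m : ℝ) + n)) / (2 * Real.sqrt (g x)) : ℝ) : ℂ) *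
        Complex.exp (-(Complex.I * Real.pi * ((m : ℝ) + n) * y))) x :=
    ((dg.sqrt hgpos.ne').ofReal_comp).mul_const _
  have d0y : HasDerivAt
      (fun t : ℝ => ((Real.sin x * Real.sqrt ((m : ℝ) + n) / Real.sqrt (2 * (m : ℝ) + n) : ℝ) : ℂ) *
        Complex.exp ((Complex.I * Real.pi * m) * (t:ℂ)))
      (((Real.sin x * Real.sqrt ((m : ℝ) + n) / Real.sqrt (2 * (m : ℝ) + n) : ℝ) : ℂ) *
        ((Complex.I * Real.pi * m) * Complex.exp ((Complex.I * Real.pi * m) * y))) y := by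
    have := ((((hasDerivAt_id y).ofReal_comp).const_mul (Complex.I * Real.pi * m)).cexp).const_mul
      (((Real.sin x * Real.sqrt ((m : ℝ) + n) / Real.sqrt (2 * (m : ℝ) + n) : ℝ) : ℂ))
    simpa [mul_comm, mul_assoc, mul_left_comm] using this
  have d1y : HasDerivAt
      (fun t : ℝ => ((Real.cos x * Real.sqrt ((m : ℝ) + n) / Real.sqrt ((m : ℝ) + 2 * n) : ℝ) : ℂ) *
        Complex.exp ((Complex.I * Real.pi * n) * (t:ℂ)))
      (((Real.cos x * Real.sqrt ((m : ℝ) + n) / Real.sqrt ((m : ℝ) + 2 * n) : ℝ) : ℂ) *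
        ((Complex.I * Real.pi * n) * Complex.exp ((Complex.I * Real.pi * n) * y))) y := by
    have := ((((hasDerivAt_id y).ofReal_comp).const_mul (Complex.I * Real.pi * n)).cexp).const_mul
      (((Real.cos x * Real.sqrt ((m : ℝ) + n) / Real.sqrt ((m : ℝ) + 2 * n) : ℝ) : ℂ))
    simpa [mul_comm, mul_assoc, mul_left_comm] using this
  have d2y : HasDerivAt
      (fun t : ℝ => ((Real.sqrt (g x) : ℝ) : ℂ) *
        Complex.exp (-((Complex.I * Real.pi * ((m : ℝ) + n)) * (t:ℂ))))
      (((Real.sqrt (g x) : ℝ) : ℂ) *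
        (-(Complex.I * Real.pi * ((m : ℝ) + n)) *
          Complex.exp (-((Complex.I * Real.pi * ((m : ℝ) + n)) * y)))) y := by
    have := (((((hasDerivAt_id y).ofReal_comp).const_mul
      (Complex.I * Real.pi * ((m : ℝ) + n))).neg).cexp).const_mul
      (((Real.sqrt (g x) : ℝ) : ℂ))
    simpa [mul_comm, mul_assoc, mul_left_comm] using this
  rw [Fin.sum_univ_three, e0x, e1x, e2x, e0y, e1y, e2y,
    d0x.deriv, d1x.deriv, d2x.deriv, d0y.deriv, d1y.deriv, d2y.deriv]
  have hw0 : (starRingEnd ℂ) (Complex.I * (Real.pi:ℝ) * (m:ℂ) * (y:ℝ)) =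
      -(Complex.I * (Real.pi:ℝ) * (m:ℂ) * (y:ℝ)) := by
    simp [map_mul, Complex.conj_I, Complex.conj_ofReal]
  have hw1 : (starRingEnd ℂ) (Complex.I * (Real.pi:ℝ) * (n:ℂ) * (y:ℝ)) =
      -(Complex.I * (Real.pi:ℝ) * (n:ℂ) * (y:ℝ)) := by
    simp [map_mul, Complex.conj_I, Complex.conj_ofReal]
  have hw2 : (starRingEnd ℂ) (-(Complex.I * (Real.pi:ℝ) * (((m:ℝ):ℂ) + (n:ℂ)) * (y:ℝ))) =
      -(-(Complex.I * (Real.pi:ℝ) * (((m:ℝ):ℂ) + (n:ℂ)) * (y:ℝ))) := by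
    simp [map_mul, map_neg, Complex.conj_I, Complex.conj_ofReal]
  rw [key _ _ _ _ hw0, key _ _ _ _ hw1]
  rw [key _ _ _ _ hw2]
  simp only [map_mul, map_neg, map_add, Complex.conj_ofReal, Complex.conj_I, map_natCast,
    Complex.ofReal_mul, Complex.ofReal_div, Complex.ofReal_neg, Complex.ofReal_add,
    Complex.ofReal_natCast, Complex.ofReal_ofNat, Complex.ofReal_pow, map_div₀]
  have hBne : Real.sqrt (2 * (m:ℝ) + n) ≠ 0 := (Real.sqrt_pos.mpr hB2).ne'
  have hCne : Real.sqrt ((m:ℝ) + 2 * n) ≠ 0 := (Real.sqrt_pos.mpr hC2).ne'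
  have hp : Real.sqrt ((m:ℝ) + n) * Real.sqrt ((m:ℝ) + n) = (m:ℝ) + n :=
    Real.mul_self_sqrt (by positivity)
  have hq : Real.sqrt (2*(m:ℝ) + n) * Real.sqrt (2*(m:ℝ) + n) = 2*(m:ℝ) + n :=
    Real.mul_self_sqrt (by positivity)
  have hr : Real.sqrt ((m:ℝ) + 2*n) * Real.sqrt ((m:ℝ) + 2*n) = (m:ℝ) + 2*n :=
    Real.mul_self_sqrt (by positivity)
  have hR : (m:ℝ) * (Real.cos x * Real.sqrt ((m:ℝ)+n)/Real.sqrt (2*(m:ℝ)+n) *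
        (Real.sin x * Real.sqrt ((m:ℝ)+n)/Real.sqrt (2*(m:ℝ)+n)))
      + (n:ℝ) * (-Real.sin x * Real.sqrt ((m:ℝ)+n)/Real.sqrt ((m:ℝ)+2*n) *
        (Real.cos x * Real.sqrt ((m:ℝ)+n)/Real.sqrt ((m:ℝ)+2*n)))
      - ((m:ℝ)+n) * (((n:ℝ)*(2*Real.cos x * -Real.sin x)/((m:ℝ)+2*n) +
          (m:ℝ)*(2*Real.sin x*Real.cos x)/(2*(m:ℝ)+n))/(2*Real.sqrt (g x)) * Real.sqrt (g x))
      = 0 := by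
    field_simp
    have s1 : Real.sqrt ((m:ℝ) + n) ^ 2 = (m:ℝ) + n := Real.sq_sqrt (by positivity)
    have s2 : Real.sqrt ((m:ℝ) + n * 2) ^ 2 = (m:ℝ) + n * 2 := Real.sq_sqrt (by positivity)
    have s3 : Real.sqrt ((m:ℝ) * 2 + n) ^ 2 = (m:ℝ) * 2 + n := Real.sq_sqrt (by positivity)
    rw [s1, s2, s3]
    ring
  have hC' := congrArg (fun r : ℝ => (r : ℂ)) hR
  simp only [Complex.ofReal_mul, Complex.ofReal_div, Complex.ofReal_add, Complex.ofReal_neg,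
    Complex.ofReal_sub, Complex.ofReal_natCast, Complex.ofReal_ofNat, Complex.ofReal_zero] at hC'
  linear_combination (-(Complex.I * (Real.pi : ℝ))) * hC'
end

section
/- Let Ω₂ = c₁(z² − γ²) dz / ((z−Q₁)(z−Q₂)(z−Q₃)(z²−b²)) with b, Q₁, Q₂, Q₃, a real, γ purely imaginary, all poles simple. The regularity conditions Res_a Ω₁ + Res_b Ω₂ = 0 and Res_{−a} Ω₁ + Res_{−b} Ω₂ = 0, where Ω₁ = dz/(z(z²−a²)), force c₁ = −b(b−Q₁)(b−Q₂)(b−Q₃)/(a²(b²−γ²)) and Q₃ = −b²(Q₁+Q₂)/(b² + Q₁Q₂). -/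
/-- the regularity (gluing) conditions
`Res_a Ω₁ + Res_b Ω₂ = 0` and `Res_{−a} Ω₁ + Res_{−b} Ω₂ = 0` force
`c₁ = −b(b−Q₁)(b−Q₂)(b−Q₃)/(a²(b²−γ²))` and `Q₃ = −b²(Q₁+Q₂)/(b²+Q₁Q₂)`. -/
theorem stmt_10 (a b Q₁ Q₂ Q₃ : ℝ) (γ c₁ : ℂ) (hγ : γ.re = 0)
    (ha : a ≠ 0) (hb : b ≠ 0)
    (hbQ₁ : (b : ℂ) ≠ (Q₁ : ℂ)) (hbQ₂ : (b : ℂ) ≠ (Q₂ : ℂ)) (hbQ₃ : (b : ℂ) ≠ (Q₃ : ℂ))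
    (hbQ₁' : -(b : ℂ) ≠ (Q₁ : ℂ)) (hbQ₂' : -(b : ℂ) ≠ (Q₂ : ℂ)) (hbQ₃' : -(b : ℂ) ≠ (Q₃ : ℂ))
    (hbγ : (b : ℂ) ^ 2 - γ ^ 2 ≠ 0) (hQQ : (b : ℂ) ^ 2 + (Q₁ : ℂ) * (Q₂ : ℂ) ≠ 0)
    (hres_b : 1 / (2 * (a : ℂ) ^ 2) +
      c₁ * ((b : ℂ) ^ 2 - γ ^ 2) /
        (((b : ℂ) - Q₁) * ((b : ℂ) - Q₂) * ((b : ℂ) - Q₃) * (2 * (b : ℂ))) = 0)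
    (hres_nb : 1 / (2 * (a : ℂ) ^ 2) +
      c₁ * ((b : ℂ) ^ 2 - γ ^ 2) /
        ((-(b : ℂ) - Q₁) * (-(b : ℂ) - Q₂) * (-(b : ℂ) - Q₃) * (-(2 * (b : ℂ)))) = 0) :
    c₁ = -(b : ℂ) * ((b : ℂ) - Q₁) * ((b : ℂ) - Q₂) * ((b : ℂ) - Q₃) /
        ((a : ℂ) ^ 2 * ((b : ℂ) ^ 2 - γ ^ 2)) ∧
    (Q₃ : ℂ) = -(b : ℂ) ^ 2 * ((Q₁ : ℂ) + Q₂) / ((b : ℂ) ^ 2 + (Q₁ : ℂ) * Q₂) := by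
  have ha' : (a:ℂ) ≠ 0 := Complex.ofReal_ne_zero.mpr ha
  have hb' : (b:ℂ) ≠ 0 := Complex.ofReal_ne_zero.mpr hb
  have h1 : (b:ℂ) - Q₁ ≠ 0 := sub_ne_zero.mpr hbQ₁
  have h2 : (b:ℂ) - Q₂ ≠ 0 := sub_ne_zero.mpr hbQ₂
  have h3 : (b:ℂ) - Q₃ ≠ 0 := sub_ne_zero.mpr hbQ₃
  have h1' : -(b:ℂ) - Q₁ ≠ 0 := sub_ne_zero.mpr hbQ₁'
  have h2' : -(b:ℂ) - Q₂ ≠ 0 := sub_ne_zero.mpr hbQ₂'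
  have h3' : -(b:ℂ) - Q₃ ≠ 0 := sub_ne_zero.mpr hbQ₃'
  field_simp at hres_b hres_nb
  have key' : (4:ℂ) * (b:ℂ) * ((Q₃:ℂ) * ((b:ℂ)^2 + (Q₁:ℂ) * Q₂) + (b:ℂ)^2 * ((Q₁:ℂ) + Q₂)) = 0 := by
    linear_combination -2 * (hres_b + hres_nb)
  have key : (Q₃:ℂ) * ((b:ℂ)^2 + (Q₁:ℂ) * Q₂) + (b:ℂ)^2 * ((Q₁:ℂ) + Q₂) = 0 := by
    rcases mul_eq_zero.mp key' with h | h
    · rcases mul_eq_zero.mp h with h | h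
      · norm_num at h
      · exact absurd h hb'
    · exact h
  constructor
  · field_simp
    linear_combination hres_b
  · rw [eq_div_iff hQQ]
    linear_combination key
end
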